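/- Let m ≥ 1 and n ≥ 1 be integers. Then ∑_{n₁+⋯+n_m = n−1} C^m_{n₁} ⋯ C^m_{n_m} = C^m_n, where the sum runs over all m-tuples (n₁,…,n_m) of nonnegative integers with n₁+⋯+n_m = n−1. -/

import Mathlib

open Finset

/-- Raney numbers `F p r n = r/(np+r) * C(np+r, n)` in product form. -/
def raney (p : ℕ) (r : ℚ) : ℕ → ℚ
  | 0 => 1
  | n+1 => r * (∏ i ∈ Finset.range n, (((n:ℚ)+1) * p + r - ((i:ℚ)+1))) / (Nat.factorial (n+1))

@[simp] lemma raney_zero (p : ℕ) (r : ℚ) : raney p r 0 = 1 := rfl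

lemma raney_succ (p : ℕ) (r : ℚ) (n : ℕ) :
    raney p r (n+1)
      = r * (∏ i ∈ Finset.range n, (((n:ℚ)+1) * p + r - ((i:ℚ)+1))) / (Nat.factorial (n+1)) := rfl

@[simp] lemma raney_r_zero (p : ℕ) (n : ℕ) : raney p 0 (n+1) = 0 := by
  simp [raney_succ]

lemma raney_pascal (p : ℕ) (r : ℚ) (n : ℕ) :
    raney p r (n+1) = raney p (r-1) (n+1) + raney p (r + p - 1) n := by
  cases n with
  | zero => simp [raney_succ]
  | succ n =>
    rw [raney_succ, raney_succ, raney_succ]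
    push_cast
    set A : ℚ := ((n:ℚ)+2) * p + r with hA
    set P : ℚ := ∏ i ∈ Finset.range n, (A - ((i:ℚ)+2)) with hP
    have e1 : (∏ i ∈ Finset.range (n+1), (((n:ℚ)+1+1) * p + r - ((i:ℚ)+1)))
        = P * (A - 1) := by
      rw [Finset.prod_range_succ']
      congr 1
      · exact Finset.prod_congr rfl fun i _ => by push_cast [hA]; ring
      · push_cast [hA]; ring
    have e2 : (∏ i ∈ Finset.range (n+1), (((n:ℚ)+1+1) * p + (r-1) - ((i:ℚ)+1)))
        = P * (A - ((n:ℚ)+2)) := by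
      rw [Finset.prod_range_succ]
      congr 1
      · exact Finset.prod_congr rfl fun i _ => by push_cast [hA]; ring
      · push_cast [hA]; ring
    have e3 : (∏ i ∈ Finset.range n, (((n:ℚ)+1) * p + (r + p - 1) - ((i:ℚ)+1))) = P := by
      exact Finset.prod_congr rfl fun i _ => by push_cast [hA]; ring
    rw [e1, e2, e3]
    have hfac : ((Nat.factorial (n+1+1)) : ℚ) = ((n:ℚ)+2) * (Nat.factorial (n+1)) := by
      push_cast [Nat.factorial_succ (n+1)]; ring
    have hf1 : ((Nat.factorial (n+1)) : ℚ) ≠ 0 := by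
      exact_mod_cast Nat.factorial_ne_zero (n+1)
    have hn2 : ((n:ℚ)+2) ≠ 0 := by positivity
    rw [hfac]
    field_simp
    ring

lemma raney_conv (p : ℕ) : ∀ (n : ℕ) (s : ℕ) (r : ℚ),
    ∑ k ∈ Finset.range (n+1), raney p r k * raney p (s:ℚ) (n-k) = raney p (r + s) n := by
  intro n
  induction n with
  | zero => intro s r; simp
  | succ n ih =>
    intro s
    induction s with
    | zero =>
      intro r
      rw [Finset.sum_range_succ]
      have h0 : ∀ k ∈ Finset.range (n+1), raney p r k * raney p ((0:ℕ):ℚ) (n+1-k) = 0 := by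
        intro k hk
        rw [Nat.succ_sub (Nat.lt_succ_iff.mp (Finset.mem_range.mp hk))]
        push_cast
        simp
      rw [Finset.sum_eq_zero h0]
      simp
    | succ s ihs =>
      intro r
      have key : ∀ k ∈ Finset.range (n+1),
          raney p r k * raney p ((s+1 : ℕ):ℚ) (n+1-k)
            = raney p r k * raney p ((s:ℕ):ℚ) (n+1-k)
              + raney p r k * raney p (((s:ℕ):ℚ)+(p:ℚ)) (n-k) := by
        intro k hk
        have hk' : k ≤ n := Nat.lt_succ_iff.mp (Finset.mem_range.mp hk)
        rw [Nat.succ_sub hk']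
        have hpas := raney_pascal p ((s:ℚ)+1) (n-k)
        rw [show ((s:ℚ)+1) - 1 = (s:ℚ) by ring,
          show ((s:ℚ)+1) + (p:ℚ) - 1 = (s:ℚ) + (p:ℚ) by ring] at hpas
        push_cast
        rw [hpas]
        ring
      rw [Finset.sum_range_succ, Finset.sum_congr rfl key, Finset.sum_add_distrib]
      have e1 : ∑ k ∈ Finset.range (n+1), raney p r k * raney p ((s:ℕ):ℚ) (n+1-k)
          + raney p r (n+1) * raney p ((s:ℕ):ℚ) (n+1-(n+1)) = raney p (r + (s:ℚ)) (n+1) := by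
        rw [← Finset.sum_range_succ]
        exact ihs r
      have e2 : ∑ k ∈ Finset.range (n+1), raney p r k * raney p (((s:ℕ):ℚ)+(p:ℚ)) (n-k)
          = raney p (r + ((s:ℚ)+(p:ℚ))) n := by
        have := ih (s+p) r
        push_cast at this
        convert this using 2
      have e3 := raney_pascal p (r+(s:ℚ)+1) n
      rw [show (r+(s:ℚ)+1) - 1 = r + (s:ℚ) by ring,
        show (r+(s:ℚ)+1) + (p:ℚ) - 1 = r + ((s:ℚ) + (p:ℚ)) by ring] at e3
      rw [show r + ((s:ℕ)+1 : ℕ) = r + (s:ℚ) + 1 by push_cast; ring, e3]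
      rw [show r + ((s:ℚ)+(p:ℚ)) = r + (s:ℚ) + (p:ℚ) by ring] at e3
      simp only [Nat.sub_self, raney_zero, mul_one] at e1 ⊢
      linarith [e1, e2]

lemma sum_antidiagonalTuple_succ {M : Type*} [AddCommMonoid M] (k n : ℕ)
    (g : (Fin (k+1) → ℕ) → M) :
    ∑ f ∈ Finset.Nat.antidiagonalTuple (k+1) n, g f
      = ∑ x ∈ (Finset.HasAntidiagonal.antidiagonal n).sigma
          (fun ab : ℕ × ℕ => Finset.Nat.antidiagonalTuple k ab.2),
          g (Fin.cons x.1.1 x.2 : Fin (k+1) → ℕ) := by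
  symm
  refine Finset.sum_nbij' (i := fun x : Σ _ : ℕ × ℕ, (Fin k → ℕ) =>
      (Fin.cons x.1.1 x.2 : Fin (k+1) → ℕ))
    (j := fun f : Fin (k+1) → ℕ => (⟨⟨f 0, ∑ i : Fin k, f i.succ⟩, Fin.tail f⟩ :
      Σ _ : ℕ × ℕ, (Fin k → ℕ))) ?_ ?_ ?_ ?_ ?_
  · intro x hx
    rw [Finset.mem_sigma, Finset.HasAntidiagonal.mem_antidiagonal, Finset.Nat.mem_antidiagonalTuple] at hx
    rw [Finset.Nat.mem_antidiagonalTuple, Fin.sum_cons, hx.2, hx.1]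
  · intro f hf
    rw [Finset.Nat.mem_antidiagonalTuple] at hf
    rw [Finset.mem_sigma, Finset.HasAntidiagonal.mem_antidiagonal, Finset.Nat.mem_antidiagonalTuple]
    constructor
    · rw [← hf, Fin.sum_univ_succ]
    · rfl
  · intro x hx
    rw [Finset.mem_sigma, Finset.HasAntidiagonal.mem_antidiagonal, Finset.Nat.mem_antidiagonalTuple] at hx
    refine Sigma.ext ?_ (heq_of_eq ?_)
    · simp only [Fin.cons_zero]
      ext
      · rfl
      · simp [Fin.cons_succ, hx.2]
    · simp [Fin.tail_cons]
  · intro f _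
    exact Fin.cons_self_tail f
  · intro x _
    rfl

lemma raney_tuple (p : ℕ) : ∀ (m N : ℕ),
    ∑ f ∈ Finset.Nat.antidiagonalTuple m N, ∏ i, raney p 1 (f i) = raney p (m:ℚ) N := by
  intro m
  induction m with
  | zero =>
    intro N
    cases N with
    | zero => simp
    | succ N => simp
  | succ m ih =>
    intro N
    rw [sum_antidiagonalTuple_succ, Finset.sum_sigma]
    have step : ∀ ab ∈ Finset.HasAntidiagonal.antidiagonal N,
        ∑ f ∈ Finset.Nat.antidiagonalTuple m ab.2, ∏ i, raney p 1 ((Fin.cons ab.1 f : Fin (m+1) → ℕ) i)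
          = raney p 1 ab.1 * raney p (m:ℚ) ab.2 := by
      intro ab _
      rw [← ih ab.2, Finset.mul_sum]
      refine Finset.sum_congr rfl fun f _ => ?_
      rw [Fin.prod_univ_succ, Fin.cons_zero]
      simp [Fin.cons_succ]
    rw [Finset.sum_congr rfl step, Finset.Nat.sum_antidiagonal_eq_sum_range_succ_mk]
    have := raney_conv p N m 1
    rw [show (((m+1:ℕ)):ℚ) = 1 + (m:ℚ) by push_cast; ring]
    exact this

/-- The `n`-th `m`-ary Catalan number `C^m_n = binom(nm, n) / (n(m−1)+1)`, as a rational
number. -/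
def mCatalan (m n : ℕ) : ℚ :=
  (Nat.choose (n * m) n : ℚ) / ((n : ℚ) * ((m : ℚ) - 1) + 1)

lemma cast_descFactorial_prod (a b : ℕ) (h : b ≤ a) :
    (((a.descFactorial b) : ℕ) : ℚ) = ∏ i ∈ Finset.range b, ((a:ℚ) - (i:ℚ)) := by
  rw [Nat.descFactorial_eq_prod_range, Nat.cast_prod]
  refine Finset.prod_congr rfl fun i hi => ?_
  have hi' : i ≤ a := le_trans (Nat.le_of_lt_succ (Nat.lt_succ_of_lt (Finset.mem_range.mp hi)))
    (le_trans (Nat.le_of_lt_succ (Nat.lt_succ_of_le (le_refl b))) h)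
  exact Nat.cast_sub hi'

lemma choose_mul_factorial (a b : ℕ) :
    ((Nat.choose a b : ℕ) : ℚ) * ((Nat.factorial b : ℕ) : ℚ) = ((a.descFactorial b : ℕ) : ℚ) := by
  norm_cast
  rw [Nat.descFactorial_eq_factorial_mul_choose]
  ring

lemma mCatalan_eq_raney (m : ℕ) (hm : 1 ≤ m) (k : ℕ) : mCatalan m k = raney m 1 k := by
  cases k with
  | zero => simp [mCatalan, raney]
  | succ j =>
    rw [mCatalan, raney_succ]
    have hm1 : (1:ℚ) ≤ (m:ℚ) := by exact_mod_cast hm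
    have hj0 : (0:ℚ) ≤ (j:ℚ) := by positivity
    have hDne : ((j+1 : ℕ):ℚ) * ((m:ℚ) - 1) + 1 ≠ 0 := by push_cast; nlinarith
    have hfne : ((Nat.factorial (j+1) : ℕ) : ℚ) ≠ 0 := by
      exact_mod_cast Nat.factorial_ne_zero (j+1)
    rw [div_eq_div_iff hDne hfne]
    have hle : j + 1 ≤ (j+1)*m := Nat.le_mul_of_pos_right _ (by omega)
    rw [choose_mul_factorial ((j+1)*m) (j+1), cast_descFactorial_prod _ _ hle,
      Finset.prod_range_succ]
    have hmid : ∏ i ∈ Finset.range j, ((((j+1)*m : ℕ):ℚ) - (i:ℚ))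
        = ∏ i ∈ Finset.range j, (((j:ℚ)+1) * m + 1 - ((i:ℚ)+1)) :=
      Finset.prod_congr rfl fun i _ => by push_cast; ring
    rw [hmid]
    push_cast
    ring

lemma raney_m_eq_mCatalan (m n : ℕ) (hm : 1 ≤ m) (hn : 1 ≤ n) :
    raney m (m:ℚ) (n-1) = mCatalan m n := by
  obtain ⟨N, rfl⟩ : ∃ N, n = N + 1 := ⟨n - 1, by omega⟩
  simp only [Nat.add_sub_cancel]
  have hm0 : (m:ℚ) ≠ 0 := Nat.cast_ne_zero.mpr (by omega)
  cases N with
  | zero =>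
    simp [mCatalan, Nat.choose_one_right]
    field_simp
  | succ j =>
    rw [mCatalan, raney_succ]
    have hm1 : (1:ℚ) ≤ (m:ℚ) := by exact_mod_cast hm
    have hj0 : (0:ℚ) ≤ (j:ℚ) := by positivity
    have hDne : ((j+1+1 : ℕ):ℚ) * ((m:ℚ) - 1) + 1 ≠ 0 := by push_cast; nlinarith
    have hfne : ((Nat.factorial (j+1) : ℕ) : ℚ) ≠ 0 := by
      exact_mod_cast Nat.factorial_ne_zero (j+1)
    rw [eq_comm, div_eq_div_iff hDne hfne]
    have hj2 : ((j:ℚ)+2) ≠ 0 := by positivity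
    apply mul_left_cancel₀ hj2
    have hle : j + 2 ≤ (j+2)*m := Nat.le_mul_of_pos_right _ (by omega)
    have hCF : ((j:ℚ)+2) * (((Nat.choose ((j+1+1)*m) (j+1+1) : ℕ):ℚ)
          * ((Nat.factorial (j+1) : ℕ) : ℚ))
        = ((((j+2)*m).descFactorial (j+2) : ℕ) : ℚ) := by
      rw [← choose_mul_factorial ((j+2)*m) (j+2)]
      have : ((Nat.factorial (j+2) : ℕ) : ℚ) = ((j:ℚ)+2) * ((Nat.factorial (j+1) : ℕ) : ℚ) := by
        rw [Nat.factorial_succ (j+1)]; push_cast; ring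
      rw [this]
      ring
    rw [hCF, cast_descFactorial_prod _ _ hle, Finset.prod_range_succ, Finset.prod_range_succ']
    have hmid : ∏ i ∈ Finset.range j, ((((j+2)*m : ℕ):ℚ) - ((i:ℚ)+1))
        = ∏ i ∈ Finset.range j, (((j:ℚ)+1) * m + m - ((i:ℚ)+1)) :=
      Finset.prod_congr rfl fun i _ => by push_cast; ring
    have hmid2 : ∏ i ∈ Finset.range j, ((((j+2)*m : ℕ):ℚ) - ((i+1 : ℕ):ℚ))
        = ∏ i ∈ Finset.range j, (((j:ℚ)+1) * m + m - ((i:ℚ)+1)) :=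
      Finset.prod_congr rfl fun i _ => by push_cast; ring
    rw [hmid2]
    push_cast
    ring

/-- For integers `m ≥ 1` and `n ≥ 1`,
`∑_{n₁+⋯+n_m = n−1} C^m_{n₁} ⋯ C^m_{n_m} = C^m_n`, the sum running over all `m`-tuples of
nonnegative integers summing to `n−1`. -/
theorem mCatalan_recursion (m n : ℕ) (hm : 1 ≤ m) (hn : 1 ≤ n) :
    ∑ f ∈ Finset.Nat.antidiagonalTuple m (n - 1), ∏ i, mCatalan m (f i) = mCatalan m n := by
  have h1 : ∀ f ∈ Finset.Nat.antidiagonalTuple m (n-1),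
      ∏ i, mCatalan m (f i) = ∏ i, raney m 1 (f i) := by
    intro f _
    exact Finset.prod_congr rfl fun i _ => mCatalan_eq_raney m hm (f i)
  rw [Finset.sum_congr rfl h1, raney_tuple m m (n-1), raney_m_eq_mCatalan m n hm hn]
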